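/- (Consistency of the stacked linear localization system.) Under the geometric model, the true parameters satisfy the per-path linear equations used in the least-squares localization: for the LOS path, p_UE + c·τ_B·f_{1,rx} = p_BS + c·τ_1·f_{1,rx}; and for each NLOS path l ≥ 2, p_UE + c·τ_B·f_{l,rx} + d_l·(f_{l,rx} − f_{l,tx}) = p_BS + c·τ_l·f_{l,rx}. Hence the vector v = (p_UE, τ_B, d_2, …, d_L) ∈ ℝ^{L+2} is an exact solution of the stacked 2L-equation linear system B·v = z built from the AOAs, AODs and TOAs of the L paths. -/
import Mathlib


open Real

/-- Consistency of the stacked linear localization system: under the geometric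
model (path `0` is LOS, paths `l ≠ 0` are single-bounce NLOS with scatterer
`scat l`, direction vectors given as the unit vectors of the context), the true
parameters satisfy every per-path 2-dimensional block equation of the stacked
`2L`-equation linear system `B v = z`: for the LOS path,
`p_UE + c τ_B f_{1,rx} = p_BS + c τ_1 f_{1,rx}`, and for each NLOS path `l`,
`p_UE + c τ_B f_{l,rx} + d_l (f_{l,rx} − f_{l,tx}) = p_BS + c τ_l f_{l,rx}`.
Hence `v = (p_UE, τ_B, d_2, …, d_L)` solves the stacked system exactly. -/
theorem stacked_localization_consistency
    (L : ℕ) (hL : 0 < L)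
    (pBS pUE : EuclideanSpace ℝ (Fin 2))
    (scat : Fin L → EuclideanSpace ℝ (Fin 2))
    (c τB : ℝ) (hc : 0 < c)
    (hne : pUE ≠ pBS)
    (hscat : ∀ l : Fin L, l.val ≠ 0 → scat l ≠ pBS ∧ scat l ≠ pUE)
    (d : Fin L → ℝ) (hd : ∀ l : Fin L, d l = ‖pBS - scat l‖)
    (τ : Fin L → ℝ)
    (hτ0 : ∀ l : Fin L, l.val = 0 → τ l = ‖pBS - pUE‖ / c + τB)
    (hτ : ∀ l : Fin L, l.val ≠ 0 →
      τ l = (‖pBS - scat l‖ + ‖pUE - scat l‖) / c + τB)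
    (frx : Fin L → EuclideanSpace ℝ (Fin 2))
    (hfrx0 : ∀ l : Fin L, l.val = 0 → frx l = ‖pUE - pBS‖⁻¹ • (pUE - pBS))
    (hfrx : ∀ l : Fin L, l.val ≠ 0 → frx l = ‖pUE - scat l‖⁻¹ • (pUE - scat l))
    (ftx : Fin L → EuclideanSpace ℝ (Fin 2))
    (hftx : ∀ l : Fin L, l.val ≠ 0 → ftx l = ‖scat l - pBS‖⁻¹ • (scat l - pBS)) :
    (∀ l : Fin L, l.val = 0 →
      pUE + (c * τB) • frx l = pBS + (c * τ l) • frx l) ∧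
    (∀ l : Fin L, l.val ≠ 0 →
      pUE + (c * τB) • frx l + d l • (frx l - ftx l) = pBS + (c * τ l) • frx l) := by
  constructor
  · intro l hl
    have h0 : ‖pUE - pBS‖ ≠ 0 := by simp [sub_eq_zero, hne]
    have hc' : c ≠ 0 := hc.ne'
    rw [hτ0 l hl, hfrx0 l hl, norm_sub_rev pBS pUE]
    match_scalars <;> field_simp <;> (first | ring1 | exact Or.inl (by ring1))
  · intro l hl
    obtain ⟨h1, h2⟩ := hscat l hl
    have e1 : ‖scat l - pBS‖ ≠ 0 := by simp [sub_eq_zero, h1]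
    have e2 : ‖pUE - scat l‖ ≠ 0 := by simp [sub_eq_zero, h2.symm]
    have hc' : c ≠ 0 := hc.ne'
    rw [hτ l hl, hfrx l hl, hftx l hl, hd l, norm_sub_rev pBS (scat l)]
    match_scalars <;> field_simp <;> (first | ring1 | exact Or.inl (by ring1))
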